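/- Let G = K₅ − M, the complete graph on 5 vertices with a maximum matching (two disjoint edges) removed. Then Tr₂(G) = 3 = ⌊(5−1)/2⌋ + 1, although G is not complete. -/
import Mathlib


open SimpleGraph

def TwoTransPart {V : Type*} (G : SimpleGraph V) (k : ℕ) (P : Fin k → Set V) : Prop :=
  (∀ i, (P i).Nonempty) ∧ (∀ v, ∃! i, v ∈ P i) ∧
    ∀ i j : Fin k, i < j → ∀ v ∈ P j,
      ∃ u w, u ∈ P i ∧ w ∈ P i ∧ u ≠ w ∧ G.Adj u v ∧ G.Adj w v

/-- The 2-transitivity `Tr₂(G)`: the maximum size of a 2-transitive partition of `G`. -/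
noncomputable def tr2 {V : Type*} (G : SimpleGraph V) : ℕ :=
  sSup {k | ∃ P : Fin k → Set V, TwoTransPart G k P}

def Gd : SimpleGraph (Fin 5) :=
  (⊤ : SimpleGraph (Fin 5)) \
    SimpleGraph.fromEdgeSet {s((0 : Fin 5), (1 : Fin 5)), s((2 : Fin 5), (3 : Fin 5))}

lemma Gd_adj (u v : Fin 5) : Gd.Adj u v ↔
    u ≠ v ∧ s(u,v) ≠ s((0:Fin 5),1) ∧ s(u,v) ≠ s((2:Fin 5),3) := by
  simp [Gd, fromEdgeSet_adj]; tauto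

lemma mem3 : ∃ P : Fin 3 → Set (Fin 5), TwoTransPart Gd 3 P := by
  refine ⟨fun i => ↑(![({0,1} : Finset (Fin 5)), {2,3}, {4}] i), ?_, ?_, ?_⟩
  · intro i; fin_cases i <;> simp
  · intro v
    simp only [Finset.mem_coe]
    fin_cases v
    · exact ⟨0, by decide, by decide⟩
    · exact ⟨0, by decide, by decide⟩
    · exact ⟨1, by decide, by decide⟩
    · exact ⟨1, by decide, by decide⟩
    · exact ⟨2, by decide, by decide⟩
  · intro i j hij v hv
    simp only [Finset.mem_coe] at hv ⊢
    simp only [Gd_adj]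
    revert hv; revert hij
    revert i j v
    decide

lemma upper (k : ℕ) (hP : ∃ P : Fin k → Set (Fin 5), TwoTransPart Gd k P) : k ≤ 3 := by
  obtain ⟨P, hne, huniq, htr⟩ := hP
  by_contra h
  push_neg at h
  have h4 : 4 ≤ k := h
  set i0 : Fin k := ⟨0, by omega⟩ with hi0
  set i1 : Fin k := ⟨1, by omega⟩ with hi1
  set i2 : Fin k := ⟨2, by omega⟩ with hi2
  set i3 : Fin k := ⟨3, by omega⟩ with hi3
  have hdisj : ∀ a b : Fin k, a ≠ b → Disjoint (P a) (P b) := by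
    intro a b hab
    rw [Set.disjoint_left]
    intro x hxa hxb
    exact hab ((huniq x).unique hxa hxb)
  obtain ⟨v, hv⟩ := hne i3
  have two : ∀ m : Fin k, m < i3 → 1 < (P m).ncard := by
    intro m hm
    obtain ⟨u, w, hu, hw, huw, _, _⟩ := htr m i3 hm v hv
    exact (Set.one_lt_ncard_iff (Set.toFinite _)).mpr ⟨u, w, hu, hw, huw⟩
  have t0 := two i0 (by simp [hi0, hi3, Fin.lt_def])
  have t1 := two i1 (by simp [hi1, hi3, Fin.lt_def])
  have t2 := two i2 (by simp [hi2, hi3, Fin.lt_def])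
  have t3 : 0 < (P i3).ncard := (Set.ncard_pos (Set.toFinite _)).mpr ⟨v, hv⟩
  have hub : ((P i0 ∪ P i1 ∪ P i2 ∪ P i3)).ncard ≤ 5 := by
    refine le_trans (Set.ncard_le_ncard (Set.subset_univ _) Set.finite_univ) ?_
    simp [Set.ncard_univ]
  rw [Set.ncard_union_eq (by
        refine Set.disjoint_union_left.mpr ⟨Set.disjoint_union_left.mpr ⟨?_, ?_⟩, ?_⟩ <;>
          exact hdisj _ _ (by simp [hi0, hi1, hi2, hi3, Fin.ext_iff])),
      Set.ncard_union_eq (by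
        refine Set.disjoint_union_left.mpr ⟨?_, ?_⟩ <;>
          exact hdisj _ _ (by simp [hi0, hi1, hi2, Fin.ext_iff])),
      Set.ncard_union_eq (hdisj _ _ (by simp [hi0, hi1, Fin.ext_iff]))] at hub
  omega

lemma tr2_Gd : tr2 Gd = 3 := by
  have hmem : (3 : ℕ) ∈ {k | ∃ P : Fin k → Set (Fin 5), TwoTransPart Gd k P} := mem3
  refine le_antisymm ?_ ?_
  · exact csSup_le ⟨3, hmem⟩ fun k hk => upper k hk
  · exact le_csSup ⟨3, fun k hk => upper k hk⟩ hmem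

theorem stmt14 :
    tr2 ((⊤ : SimpleGraph (Fin 5)) \
        SimpleGraph.fromEdgeSet {s((0 : Fin 5), (1 : Fin 5)), s((2 : Fin 5), (3 : Fin 5))}) = 3 ∧
    3 = (5 - 1) / 2 + 1 ∧
    ((⊤ : SimpleGraph (Fin 5)) \
        SimpleGraph.fromEdgeSet {s((0 : Fin 5), (1 : Fin 5)), s((2 : Fin 5), (3 : Fin 5))}) ≠ ⊤ := by
  refine ⟨tr2_Gd, by norm_num, ?_⟩
  intro hEq
  have h01 : ¬ Gd.Adj 0 1 := by
    rw [Gd_adj]; simp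
  rw [show ((⊤ : SimpleGraph (Fin 5)) \
        SimpleGraph.fromEdgeSet {s((0 : Fin 5), (1 : Fin 5)), s((2 : Fin 5), (3 : Fin 5))}) = Gd
      from rfl] at hEq
  rw [hEq] at h01
  exact h01 (by decide)
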